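/- For all i, j, m ∈ ℕ: if |i − j| ≤ m ≤ i + j and i + j − m is even, then 𝔠̄_{ijm} = (i+j−m+2)·(i−j+m+2)·(−i+j+m+2)·(i+j+m+6) / (4·√(2π·(i+1)(i+3)(j+1)(j+3)(m+1)(m+3))) (with i − j and −i + j interpreted as integers); otherwise 𝔠̄_{ijm} = 0. -/

import Mathlib

open MeasureTheory

/-- Gegenbauer (ultraspherical) polynomial `C_n^{(2)}` of degree `n` with parameter `2`,
as a real-valued function. -/
noncomputable def geg (n : ℕ) (y : ℝ) : ℝ :=
  ∑ k ∈ Finset.range (n / 2 + 1),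
    (-1:ℝ) ^ k *
      ((Nat.factorial (n - k + 1) : ℝ) /
        ((Nat.factorial k : ℝ) * (Nat.factorial (n - 2 * k) : ℝ))) *
      (2 * y) ^ (n - 2 * k)

/-- The normalization constant `𝔴_n = √(8/π)/√((n+1)(n+3))`. -/
noncomputable def wYM (n : ℕ) : ℝ :=
  Real.sqrt (8 / Real.pi) / Real.sqrt (((n:ℝ) + 1) * ((n:ℝ) + 3))

/-- The quadratic Fourier coefficients `𝔠̄_{ijm}` of the spherically symmetric equivariant
Yang–Mills equation on the Einstein cylinder. -/
noncomputable def cbar (i j m : ℕ) : ℝ :=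
  wYM i * wYM j * wYM m *
    ∫ y in (-1:ℝ)..1, geg i y * geg j y * geg m y * (1 - y ^ 2) ^ ((3:ℝ) / 2)

/-- The cubic Fourier coefficients `𝔠_{ijkm}` of the spherically symmetric equivariant
Yang–Mills equation on the Einstein cylinder. -/
noncomputable def cquad (i j k m : ℕ) : ℝ :=
  wYM i * wYM j * wYM k * wYM m *
    ∫ y in (-1:ℝ)..1, geg i y * geg j y * geg k y * geg m y * (1 - y ^ 2) ^ ((5:ℝ) / 2)

open Real intervalIntegral

lemma geg_zero (y : ℝ) : geg 0 y = 1 := by simp [geg, Nat.factorial]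

lemma geg_one (y : ℝ) : geg 1 y = 4 * y := by
  simp [geg, Nat.factorial]; ring

-- coefficient identity for middle terms
lemma coeff_id (n k : ℕ) (hk1 : 1 ≤ k) (hk2 : 2 * k ≤ n + 1) :
    ((n:ℝ)+2) * ((Nat.factorial (n+3-k) : ℝ) / (Nat.factorial k * Nat.factorial (n+2-2*k)))
      - ((n:ℝ)+4) * ((Nat.factorial (n+2-k) : ℝ) / (Nat.factorial (k-1) * Nat.factorial (n+2-2*k)))
    = ((n:ℝ)+3) * ((Nat.factorial (n+2-k) : ℝ) / (Nat.factorial k * Nat.factorial (n+1-2*k))) := by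
  have f1 : (Nat.factorial (n+2-k) : ℝ) ≠ 0 := Nat.cast_ne_zero.2 (Nat.factorial_ne_zero _)
  have f2 : (Nat.factorial (k-1) : ℝ) ≠ 0 := Nat.cast_ne_zero.2 (Nat.factorial_ne_zero _)
  have f3 : (Nat.factorial (n+1-2*k) : ℝ) ≠ 0 := Nat.cast_ne_zero.2 (Nat.factorial_ne_zero _)
  have e1 : (Nat.factorial (n+3-k) : ℝ) = ((n:ℝ)+3-k) * Nat.factorial (n+2-k) := by
    rw [show n+3-k = (n+2-k)+1 by omega, Nat.factorial_succ]
    push_cast [Nat.cast_sub (by omega : k ≤ n+2)]; ring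
  have e2 : (Nat.factorial (n+2-2*k) : ℝ) = ((n:ℝ)+2-2*k) * Nat.factorial (n+1-2*k) := by
    rw [show n+2-2*k = (n+1-2*k)+1 by omega, Nat.factorial_succ]
    push_cast [Nat.cast_sub (by omega : 2*k ≤ n+1)]; ring
  have e3 : (Nat.factorial k : ℝ) = (k:ℝ) * Nat.factorial (k-1) := by
    nth_rewrite 1 [show k = (k-1)+1 by omega]
    rw [Nat.factorial_succ]
    push_cast [Nat.cast_sub (by omega : 1 ≤ k)]; ring
  rw [e1, e2, e3]
  have hk : (k:ℝ) ≠ 0 := Nat.cast_ne_zero.2 (by omega)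
  have hz : (n:ℝ) + 2 - 2*(k:ℝ) ≠ 0 := by
    have : (2*k:ℝ) ≤ (n:ℝ)+1 := by exact_mod_cast hk2
    intro h; nlinarith
  field_simp
  ring

lemma term_id (n k : ℕ) (y : ℝ) (hk1 : 1 ≤ k) (hk2 : 2*k ≤ n+1) :
    ((n:ℝ)+2) * ((-1:ℝ)^k * ((Nat.factorial (n+2-k+1):ℝ)/((Nat.factorial k:ℝ) * (Nat.factorial (n+2-2*k):ℝ))) * (2*y)^(n+2-2*k))
    + ((n:ℝ)+4) * ((-1:ℝ)^(k-1) * ((Nat.factorial (n-(k-1)+1):ℝ)/((Nat.factorial (k-1):ℝ) * (Nat.factorial (n-2*(k-1)):ℝ))) * (2*y)^(n-2*(k-1)))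
    = ((n:ℝ)+3) * ((-1:ℝ)^k * ((Nat.factorial (n+1-k+1):ℝ)/((Nat.factorial k:ℝ) * (Nat.factorial (n+1-2*k):ℝ))) * (2*y)^(n+2-2*k)) := by
  rw [show n+2-k+1 = n+3-k from by omega, show n-(k-1)+1 = n+2-k from by omega,
      show n-2*(k-1) = n+2-2*k from by omega, show n+1-k+1 = n+2-k from by omega]
  have hs : ((-1:ℝ))^k = -(-1:ℝ)^(k-1) := by
    conv_lhs => rw [show k = (k-1)+1 from by omega]
    rw [pow_succ]; ring
  rw [hs]
  have cid := coeff_id n k hk1 hk2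
  linear_combination (-((-1:ℝ)^(k-1)) * (2*y)^(n+2-2*k)) * cid

lemma term_id0 (n : ℕ) (y : ℝ) :
    ((n:ℝ)+2) * ((-1:ℝ)^0 * ((Nat.factorial (n+2-0+1):ℝ)/((Nat.factorial 0:ℝ) * (Nat.factorial (n+2-2*0):ℝ))) * (2*y)^(n+2-2*0))
    = ((n:ℝ)+3) * ((-1:ℝ)^0 * ((Nat.factorial (n+1-0+1):ℝ)/((Nat.factorial 0:ℝ) * (Nat.factorial (n+1-2*0):ℝ))) * (2*y)^(n+2-2*0)) := by
  have f1 : (Nat.factorial (n+1) : ℝ) ≠ 0 := Nat.cast_ne_zero.2 (Nat.factorial_ne_zero _)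
  simp only [Nat.sub_zero, pow_zero, Nat.mul_zero, Nat.factorial_zero, Nat.factorial_succ]
  push_cast
  field_simp
  ring

lemma geg_rec (n : ℕ) (y : ℝ) :
    ((n:ℝ)+2) * geg (n+2) y = 2*((n:ℝ)+3)*y*geg (n+1) y - ((n:ℝ)+4)*geg n y := by
  suffices h : ((n:ℝ)+2) * geg (n+2) y + ((n:ℝ)+4) * geg n y = 2*((n:ℝ)+3)*y*geg (n+1) y by
    linarith
  have hA : ((n:ℝ)+2) * geg (n+2) y
      = ∑ k ∈ Finset.range (n/2+2), ((n:ℝ)+2) *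
          ((-1:ℝ)^k * ((Nat.factorial (n+2-k+1):ℝ)/((Nat.factorial k:ℝ) * (Nat.factorial (n+2-2*k):ℝ))) * (2*y)^(n+2-2*k)) := by
    rw [geg, Finset.mul_sum, show (n+2)/2+1 = n/2+2 from by omega]
  have hB : 2*((n:ℝ)+3)*y * geg (n+1) y
      = ∑ k ∈ Finset.range ((n+1)/2+1), ((n:ℝ)+3) *
          ((-1:ℝ)^k * ((Nat.factorial (n+1-k+1):ℝ)/((Nat.factorial k:ℝ) * (Nat.factorial (n+1-2*k):ℝ))) * (2*y)^(n+2-2*k)) := by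
    rw [geg, Finset.mul_sum]
    refine Finset.sum_congr rfl fun k hk => ?_
    have hk2 : 2*k ≤ n+1 := by
      have := Finset.mem_range.1 hk; omega
    rw [show n+2-2*k = (n+1-2*k)+1 from by omega, pow_succ]
    ring
  have hC : ((n:ℝ)+4) * geg n y
      = ∑ k ∈ Finset.range (n/2+2), (if k = 0 then (0:ℝ) else ((n:ℝ)+4) *
          ((-1:ℝ)^(k-1) * ((Nat.factorial (n-(k-1)+1):ℝ)/((Nat.factorial (k-1):ℝ) * (Nat.factorial (n-2*(k-1)):ℝ))) * (2*y)^(n-2*(k-1)))) := by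
    rw [Finset.sum_range_succ']
    simp only [Nat.succ_ne_zero, ite_false, ite_true, Nat.add_sub_cancel, add_zero,
      if_neg (Nat.succ_ne_zero _), if_pos rfl, reduceIte]
    rw [geg, Finset.mul_sum]
  rw [hA, hB, hC, ← Finset.sum_add_distrib]
  rcases Nat.even_or_odd n with he | ho
  · obtain ⟨t, rfl⟩ := he
    rw [show (t+t)/2+2 = t+2 from by omega, show ((t+t)+1)/2+1 = t+1 from by omega,
        Finset.sum_range_succ]
    have hmain : ∀ k ∈ Finset.range (t+1),
        ((t+t:ℕ):ℝ)+2 = ((t+t:ℕ):ℝ)+2 := fun _ _ => rfl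
    rw [Finset.sum_congr rfl (fun k hk => ?_), add_eq_left]
    · rw [if_neg (by omega : ¬ (t+1 = 0))]
      rw [show t+t+2-(t+1)+1 = t+2 from by omega, show t+t+2-2*(t+1) = 0 from by omega,
          show t+1-1 = t from by omega, show t+t-t+1 = t+1 from by omega,
          show t+t-2*t = 0 from by omega]
      simp only [pow_zero, Nat.factorial_zero, Nat.factorial_succ, pow_succ]
      have f1 : (Nat.factorial t : ℝ) ≠ 0 := Nat.cast_ne_zero.2 (Nat.factorial_ne_zero _)
      push_cast
      field_simp
      ring
    · rcases Nat.eq_zero_or_pos k with rfl | hk1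
      · rw [if_pos rfl, add_zero]
        exact term_id0 (t+t) y
      · rw [if_neg (by omega)]
        exact term_id (t+t) k y hk1 (by have := Finset.mem_range.1 hk; omega)
  · obtain ⟨t, rfl⟩ := ho
    rw [show (2*t+1)/2+2 = t+2 from by omega, show ((2*t+1)+1)/2+1 = t+2 from by omega]
    refine Finset.sum_congr rfl fun k hk => ?_
    rcases Nat.eq_zero_or_pos k with rfl | hk1
    · rw [if_pos rfl, add_zero]
      exact term_id0 (2*t+1) y
    · rw [if_neg (by omega)]
      exact term_id (2*t+1) k y hk1 (by have := Finset.mem_range.1 hk; omega)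

lemma geg_sin3 : ∀ (n : ℕ) (θ : ℝ),
    geg n (Real.cos θ) * Real.sin θ ^ 3
      = (((n:ℝ)+3) * Real.sin (((n:ℝ)+1)*θ) - ((n:ℝ)+1) * Real.sin (((n:ℝ)+3)*θ)) / 4 := by
  intro n
  induction n using Nat.strong_induction_on with
  | _ n ih =>
    match n with
    | 0 =>
      intro θ
      rw [geg_zero]
      push_cast
      norm_num
      linear_combination (1/4) * Real.sin_three_mul θ
    | 1 =>
      intro θ
      rw [geg_one]
      push_cast
      norm_num
      have hs2 := Real.sin_two_mul θ
      have hc2 := Real.cos_two_mul θ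
      have hs4 : Real.sin (4*θ) = 2 * Real.sin (2*θ) * Real.cos (2*θ) := by
        rw [show (4:ℝ)*θ = 2*(2*θ) from by ring, Real.sin_two_mul]
      have hp := Real.sin_sq_add_cos_sq θ
      linear_combination (1/2)*hs4 + Real.sin (2*θ)*hc2 + (2*Real.cos θ^2 - 2)*hs2
        + (4*Real.sin θ*Real.cos θ)*hp
    | (n+2) =>
      intro θ
      have IH1 := ih n (by omega) θ
      have IH2 := ih (n+1) (by omega) θ
      have r := geg_rec n (Real.cos θ)
      have e1 : ((n:ℝ)+2) * (geg (n+2) (Real.cos θ) * Real.sin θ^3)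
          = 2*((n:ℝ)+3)*Real.cos θ*(geg (n+1) (Real.cos θ) * Real.sin θ^3)
            - ((n:ℝ)+4)*(geg n (Real.cos θ) * Real.sin θ^3) := by
        linear_combination (Real.sin θ^3) * r
      rw [IH1, IH2] at e1
      have p1 : 2*Real.cos θ * Real.sin (((n:ℝ)+2)*θ)
          = Real.sin (((n:ℝ)+3)*θ) + Real.sin (((n:ℝ)+1)*θ) := by
        rw [show ((n:ℝ)+3)*θ = ((n:ℝ)+2)*θ + θ from by ring,
            show ((n:ℝ)+1)*θ = ((n:ℝ)+2)*θ - θ from by ring,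
            Real.sin_add, Real.sin_sub]
        ring
      have p2 : 2*Real.cos θ * Real.sin (((n:ℝ)+4)*θ)
          = Real.sin (((n:ℝ)+5)*θ) + Real.sin (((n:ℝ)+3)*θ) := by
        rw [show ((n:ℝ)+5)*θ = ((n:ℝ)+4)*θ + θ from by ring,
            show ((n:ℝ)+3)*θ = ((n:ℝ)+4)*θ - θ from by ring,
            Real.sin_add, Real.sin_sub]
        ring
      have hne : ((n:ℝ)+2) ≠ 0 := by positivity
      push_cast at IH2 e1 ⊢
      rw [show ((n:ℝ)+1+1) = (n:ℝ)+2 from by ring, show ((n:ℝ)+1+3) = (n:ℝ)+4 from by ring] at e1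
      rw [show ((n:ℝ)+2+1) = (n:ℝ)+3 from by ring, show ((n:ℝ)+2+3) = (n:ℝ)+5 from by ring]
      apply mul_left_cancel₀ hne
      linear_combination e1 + (((n:ℝ)+3)*((n:ℝ)+4)/4) * p1 - (((n:ℝ)+2)*((n:ℝ)+3)/4) * p2

lemma geg_cont (n : ℕ) : Continuous (geg n) := by
  unfold geg
  exact continuous_finset_sum _ fun k _ =>
    (continuous_const.mul ((continuous_const.mul continuous_id).pow _))

lemma w_cont : Continuous (fun y : ℝ => (1 - y^2) ^ ((3:ℝ)/2)) := by
  apply Continuous.rpow_const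
  · continuity
  · intro x; right; norm_num

lemma intcos (c : ℝ) (hc : c ≠ 0) :
    ∫ θ in (0:ℝ)..π, Real.cos (c*θ) = Real.sin (c*π)/c := by
  rw [intervalIntegral.integral_comp_mul_left (fun x => Real.cos x) hc]
  simp [integral_cos]
  ring

lemma sin_nat_pi (a : ℕ) : Real.sin ((a:ℝ)*π) = 0 := by
  have : ((a:ℝ)) = (((a:ℤ)):ℝ) := by push_cast; ring
  rw [this]; exact Real.sin_int_mul_pi a

lemma sin_mul_sin_int (a : ℕ) :
    ∫ θ in (0:ℝ)..π, Real.sin (((a:ℝ)+1)*θ) * Real.sin θ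
      = if a = 0 then π/2 else 0 := by
  have hpt : ∀ θ : ℝ, Real.sin (((a:ℝ)+1)*θ) * Real.sin θ
      = (Real.cos ((a:ℝ)*θ) - Real.cos (((a:ℝ)+2)*θ))/2 := by
    intro θ
    have h := Real.cos_sub_cos ((a:ℝ)*θ) (((a:ℝ)+2)*θ)
    rw [show ((a:ℝ)*θ + ((a:ℝ)+2)*θ)/2 = ((a:ℝ)+1)*θ from by ring,
        show ((a:ℝ)*θ - ((a:ℝ)+2)*θ)/2 = -θ from by ring, Real.sin_neg] at h
    linarith
  simp only [hpt]
  rw [intervalIntegral.integral_div]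
  rw [intervalIntegral.integral_sub ((by continuity : Continuous fun x : ℝ => Real.cos ((a:ℝ)*x)).intervalIntegrable _ _)
      ((by continuity : Continuous fun x : ℝ => Real.cos (((a:ℝ)+2)*x)).intervalIntegrable _ _)]
  rcases Nat.eq_zero_or_pos a with rfl | ha
  · norm_num
  · rw [if_neg (by omega), intcos ((a:ℝ)+2) (by positivity),
        intcos (a:ℝ) (by positivity), sin_nat_pi]
    have : ((a:ℝ)+2) = ((a+2:ℕ):ℝ) := by push_cast; ring
    rw [this, sin_nat_pi]
    norm_num

lemma subst_cos (f : ℝ → ℝ) (hf : Continuous f) :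
    ∫ y in (-1:ℝ)..1, f y = ∫ θ in (0:ℝ)..π, Real.sin θ * f (Real.cos θ) := by
  have h := intervalIntegral.integral_comp_smul_deriv (f := Real.cos)
    (f' := fun θ => -Real.sin θ) (g := f) (a := 0) (b := π)
    (fun x _ => Real.hasDerivAt_cos x) (continuous_sin.neg.continuousOn) hf
  simp only [Real.cos_zero, Real.cos_pi, smul_eq_mul, Function.comp] at h
  have h2 : ∫ θ in (0:ℝ)..π, -Real.sin θ * f (Real.cos θ)
      = - ∫ θ in (0:ℝ)..π, Real.sin θ * f (Real.cos θ) := by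
    rw [← intervalIntegral.integral_neg]
    congr 1; ext θ; ring
  rw [h2, intervalIntegral.integral_symm (-1) 1] at h
  linarith [h]

lemma weight_eq {θ : ℝ} (h0 : 0 ≤ θ) (hπ : θ ≤ π) :
    (1 - Real.cos θ^2) ^ ((3:ℝ)/2) = Real.sin θ^3 := by
  have hs : 0 ≤ Real.sin θ := Real.sin_nonneg_of_nonneg_of_le_pi h0 hπ
  rw [show (1 : ℝ) - Real.cos θ^2 = Real.sin θ^2 from by
        have := Real.sin_sq_add_cos_sq θ; linarith]
  rw [← Real.rpow_natCast (Real.sin θ) 2, ← Real.rpow_mul hs]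
  norm_num

lemma B_int (m : ℕ) :
    ∫ y in (-1:ℝ)..1, geg m y * (1 - y^2) ^ ((3:ℝ)/2) = if m = 0 then 3*π/8 else 0 := by
  rw [subst_cos (fun y => geg m y * (1 - y^2) ^ ((3:ℝ)/2)) ((geg_cont m).mul w_cont)]
  have hpt : Set.EqOn
      (fun θ => Real.sin θ * (geg m (Real.cos θ) * (1 - Real.cos θ^2) ^ ((3:ℝ)/2)))
      (fun θ => (((m:ℝ)+3)/4) * (Real.sin (((m:ℝ)+1)*θ) * Real.sin θ)
        - (((m:ℝ)+1)/4) * (Real.sin (((m:ℝ)+3)*θ) * Real.sin θ)) (Set.uIcc 0 π) := by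
    intro θ hθ
    rw [Set.uIcc_of_le Real.pi_nonneg] at hθ
    simp only
    rw [weight_eq hθ.1 hθ.2]
    linear_combination Real.sin θ * geg_sin3 m θ
  rw [intervalIntegral.integral_congr hpt,
      intervalIntegral.integral_sub
        ((by continuity : Continuous fun θ : ℝ => (((m:ℝ)+3)/4) * (Real.sin (((m:ℝ)+1)*θ) * Real.sin θ)).intervalIntegrable _ _)
        ((by continuity : Continuous fun θ : ℝ => (((m:ℝ)+1)/4) * (Real.sin (((m:ℝ)+3)*θ) * Real.sin θ)).intervalIntegrable _ _),
      intervalIntegral.integral_const_mul, intervalIntegral.integral_const_mul]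
  have h1 := sin_mul_sin_int m
  have h3 := sin_mul_sin_int (m+2)
  rw [if_neg (by omega)] at h3
  push_cast at h3
  rw [show ((m:ℝ)+2+1) = (m:ℝ)+3 from by ring] at h3
  rw [h1, h3]
  rcases Nat.eq_zero_or_pos m with rfl | hm
  · norm_num; ring
  · simp only [if_neg (show ¬ m = 0 from by omega)]; ring

noncomputable def TT (i j m : ℕ) : ℝ :=
  ∫ y in (-1:ℝ)..1, geg i y * geg j y * geg m y * (1-y^2)^((3:ℝ)/2)
noncomputable def YY (i j m : ℕ) : ℝ :=
  ∫ y in (-1:ℝ)..1, y * geg i y * geg j y * geg m y * (1-y^2)^((3:ℝ)/2)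

lemma cT (i j m : ℕ) :
    Continuous (fun y : ℝ => geg i y * geg j y * geg m y * (1-y^2)^((3:ℝ)/2)) :=
  (((geg_cont i).mul (geg_cont j)).mul (geg_cont m)).mul w_cont

lemma cY (i j m : ℕ) :
    Continuous (fun y : ℝ => y * geg i y * geg j y * geg m y * (1-y^2)^((3:ℝ)/2)) :=
  (((continuous_id.mul (geg_cont i)).mul (geg_cont j)).mul (geg_cont m)).mul w_cont

lemma T_rec1 (i j m : ℕ) :
    ((i:ℝ)+2) * TT (i+2) j m = 2*((i:ℝ)+3) * YY (i+1) j m - ((i:ℝ)+4) * TT i j m := by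
  have e : ((i:ℝ)+2) * TT (i+2) j m + ((i:ℝ)+4) * TT i j m
      = 2*((i:ℝ)+3) * YY (i+1) j m := by
    unfold TT YY
    rw [← intervalIntegral.integral_const_mul, ← intervalIntegral.integral_const_mul,
        ← intervalIntegral.integral_const_mul,
        ← intervalIntegral.integral_add (f := fun y => ((i:ℝ)+2) * (geg (i+2) y * geg j y * geg m y * (1-y^2)^((3:ℝ)/2)))
          (g := fun y => ((i:ℝ)+4) * (geg i y * geg j y * geg m y * (1-y^2)^((3:ℝ)/2)))
          ((continuous_const.mul (cT (i+2) j m)).intervalIntegrable _ _)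
          ((continuous_const.mul (cT i j m)).intervalIntegrable _ _)]
    apply intervalIntegral.integral_congr
    intro y _
    simp only
    linear_combination (geg j y * geg m y * (1-y^2)^((3:ℝ)/2)) * geg_rec i y
  linarith

lemma Y_shift (a j m : ℕ) :
    2*((m:ℝ)+3) * YY a j (m+1) = ((m:ℝ)+2) * TT a j (m+2) + ((m:ℝ)+4) * TT a j m := by
  unfold TT YY
  rw [← intervalIntegral.integral_const_mul, ← intervalIntegral.integral_const_mul,
      ← intervalIntegral.integral_const_mul,
      ← intervalIntegral.integral_add (f := fun y => ((m:ℝ)+2) * (geg a y * geg j y * geg (m+2) y * (1-y^2)^((3:ℝ)/2)))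
        (g := fun y => ((m:ℝ)+4) * (geg a y * geg j y * geg m y * (1-y^2)^((3:ℝ)/2)))
        ((continuous_const.mul (cT a j (m+2))).intervalIntegrable _ _)
        ((continuous_const.mul (cT a j m)).intervalIntegrable _ _)]
  apply intervalIntegral.integral_congr
  intro y _
  simp only
  linear_combination (-(geg a y * geg j y * (1-y^2)^((3:ℝ)/2))) * geg_rec m y

lemma Y_shift0 (a j : ℕ) : 4 * YY a j 0 = TT a j 1 := by
  unfold TT YY
  rw [← intervalIntegral.integral_const_mul]
  apply intervalIntegral.integral_congr
  intro y _
  simp only [geg_zero, geg_one]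
  ring

lemma T_one (j m : ℕ) : TT 1 j m = 4 * YY 0 j m := by
  unfold TT YY
  rw [← intervalIntegral.integral_const_mul]
  apply intervalIntegral.integral_congr
  intro y _
  simp only [geg_zero, geg_one]
  ring

lemma T0_comm (j m : ℕ) : TT 0 j m = TT j 0 m := by
  unfold TT
  apply intervalIntegral.integral_congr
  intro y _
  simp only
  ring

lemma T00 (m : ℕ) : TT 0 0 m = if m = 0 then 3*π/8 else 0 := by
  rw [← B_int m]
  unfold TT
  apply intervalIntegral.integral_congr
  intro y _
  simp only [geg_zero]
  ring

def tri (i j m : ℕ) : Prop :=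
  |(i:ℤ) - (j:ℤ)| ≤ (m:ℤ) ∧ (m:ℤ) ≤ (i:ℤ) + (j:ℤ) ∧ Even ((i:ℤ) + (j:ℤ) - (m:ℤ))

instance (i j m : ℕ) : Decidable (tri i j m) := by unfold tri; infer_instance

noncomputable def FF (i j m : ℕ) : ℝ :=
  if tri i j m then
    π/128 * (((i:ℝ)+j-m+2) * ((i:ℝ)-j+m+2) * (-(i:ℝ)+j+m+2) * ((i:ℝ)+j+m+6))
  else 0

lemma FF_zero {i j m : ℕ} (h : ¬ tri i j m) : FF i j m = 0 := if_neg h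

lemma not_tri_of {a b c : ℕ}
    (h : (a:ℤ)+b < c ∨ (c:ℤ) < (a:ℤ)-b ∨ (c:ℤ) < (b:ℤ)-a) : ¬ tri a b c := by
  rintro ⟨h1, h2, -⟩
  obtain ⟨l1, l2⟩ := abs_sub_le_iff.mp h1
  omega

lemma FF_rep {a b c : ℕ} (hpar : Even ((a:ℤ)+b-c))
    (hl1 : (a:ℤ)-b-2 ≤ c) (hl2 : (b:ℤ)-a-2 ≤ c) (h2 : (c:ℤ) ≤ (a:ℤ)+b+2) :
    FF a b c = π/128 * (((a:ℝ)+b-c+2) * ((a:ℝ)-b+c+2) * (-(a:ℝ)+b+c+2) * ((a:ℝ)+b+c+6)) := by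
  by_cases hin : ((c:ℤ) ≤ (a:ℤ)+b ∧ (a:ℤ)-b ≤ c ∧ (b:ℤ)-a ≤ c)
  · rw [FF, if_pos ⟨abs_sub_le_iff.mpr ⟨hin.2.1, hin.2.2⟩, hin.1, hpar⟩]
  · rw [FF, if_neg (fun hc => by
      obtain ⟨x1, x2⟩ := abs_sub_le_iff.mp hc.1
      exact hin ⟨hc.2.1, x1, x2⟩)]
    have hcase : (c:ℤ) = (a:ℤ)+b+2 ∨ (c:ℤ) = (a:ℤ)-b-2 ∨ (c:ℤ) = (b:ℤ)-a-2 := by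
      rw [Int.even_iff] at hpar
      omega
    rcases hcase with hc | hc | hc
    · have hr : (c:ℝ) = (a:ℝ)+b+2 := by exact_mod_cast congrArg (fun z : ℤ => (z : ℝ)) hc
      rw [hr]; ring
    · have hr : (c:ℝ) = (a:ℝ)-b-2 := by exact_mod_cast congrArg (fun z : ℤ => (z : ℝ)) hc
      rw [hr]; ring
    · have hr : (c:ℝ) = (b:ℝ)-a-2 := by exact_mod_cast congrArg (fun z : ℤ => (z : ℝ)) hc
      rw [hr]; ring

-- parity transfer helper
lemma cond_even {a b c : ℕ} (h : tri a b c) : Even ((a:ℤ)+b-c) := h.2.2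

lemma FR1 (i j k : ℕ) :
    2*((k:ℝ)+3) * ( ((i:ℝ)+2) * FF (i+2) j (k+1) + ((i:ℝ)+4) * FF i j (k+1) )
      = 2*((i:ℝ)+3) * ( ((k:ℝ)+2) * FF (i+1) j (k+2) + ((k:ℝ)+4) * FF (i+1) j k ) := by
  by_cases hpar : Even ((i:ℤ)+j-(k+1))
  · by_cases hA : ((k:ℤ)+1 ≤ (i:ℤ)+j+2 ∧ (i:ℤ)-j ≤ (k:ℤ)+1 ∧ (j:ℤ)-i-2 ≤ (k:ℤ)+1)
    · rw [FF_rep (a := i+2) (b := j) (c := k+1) (by push_cast; rw [Int.even_iff] at hpar ⊢; omega)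
            (by push_cast; omega) (by push_cast; omega) (by push_cast; omega),
          FF_rep (a := i) (b := j) (c := k+1) (by push_cast; rw [Int.even_iff] at hpar ⊢; omega)
            (by push_cast; omega) (by push_cast; omega) (by push_cast; omega),
          FF_rep (a := i+1) (b := j) (c := k+2) (by push_cast; rw [Int.even_iff] at hpar ⊢; omega)
            (by push_cast; omega) (by push_cast; omega) (by push_cast; omega),
          FF_rep (a := i+1) (b := j) (c := k) (by push_cast; rw [Int.even_iff] at hpar ⊢; omega)
            (by push_cast; omega) (by push_cast; omega) (by push_cast; omega)]
      push_cast
      ring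
    · have hB : ((i:ℤ)+j+4 ≤ (k:ℤ)+1) ∨ ((k:ℤ)+1 ≤ (i:ℤ)-j-2) ∨ ((k:ℤ)+1 ≤ (j:ℤ)-i-4) := by
        rw [Int.even_iff] at hpar
        omega
      rw [FF_zero (not_tri_of (by push_cast; omega)),
          FF_zero (not_tri_of (by push_cast; omega)),
          FF_zero (not_tri_of (by push_cast; omega)),
          FF_zero (not_tri_of (by push_cast; omega))]
      ring
  · rw [FF_zero (fun hc => hpar (by have := cond_even hc; rw [Int.even_iff] at this ⊢; push_cast at this ⊢; omega)),
        FF_zero (fun hc => hpar (by have := cond_even hc; rw [Int.even_iff] at this ⊢; push_cast at this ⊢; omega)),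
        FF_zero (fun hc => hpar (by have := cond_even hc; rw [Int.even_iff] at this ⊢; push_cast at this ⊢; omega)),
        FF_zero (fun hc => hpar (by have := cond_even hc; rw [Int.even_iff] at this ⊢; push_cast at this ⊢; omega))]
    ring

lemma FR0 (i j : ℕ) :
    4 * ( ((i:ℝ)+2) * FF (i+2) j 0 + ((i:ℝ)+4) * FF i j 0 )
      = 2*((i:ℝ)+3) * FF (i+1) j 1 := by
  by_cases hpar : Even ((i:ℤ)+j)
  · have hcase : j = i ∨ j = i+2 ∨ (i+4 ≤ j ∨ j+2 ≤ i) := by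
      rw [Int.even_iff] at hpar
      omega
    rcases hcase with rfl | hj | hj
    · rw [FF_rep (a := j+2) (b := j) (c := 0) (by push_cast; rw [Int.even_iff] at hpar ⊢; omega)
            (by push_cast; omega) (by push_cast; omega) (by push_cast; omega),
          FF_rep (a := j) (b := j) (c := 0) (by push_cast; rw [Int.even_iff] at hpar ⊢; omega)
            (by push_cast; omega) (by push_cast; omega) (by push_cast; omega),
          FF_rep (a := j+1) (b := j) (c := 1) (by push_cast; rw [Int.even_iff] at hpar ⊢; omega)
            (by push_cast; omega) (by push_cast; omega) (by push_cast; omega)]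
      push_cast
      ring
    · obtain rfl := hj
      rw [FF_rep (a := i+2) (b := i+2) (c := 0) (by push_cast; rw [Int.even_iff] at hpar ⊢; omega)
            (by push_cast; omega) (by push_cast; omega) (by push_cast; omega),
          FF_rep (a := i) (b := i+2) (c := 0) (by push_cast; rw [Int.even_iff] at hpar ⊢; omega)
            (by push_cast; omega) (by push_cast; omega) (by push_cast; omega),
          FF_rep (a := i+1) (b := i+2) (c := 1) (by push_cast; rw [Int.even_iff] at hpar ⊢; omega)
            (by push_cast; omega) (by push_cast; omega) (by push_cast; omega)]
      push_cast
      ring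
    · rw [FF_zero (not_tri_of (by push_cast; omega)),
          FF_zero (not_tri_of (by push_cast; omega)),
          FF_zero (not_tri_of (by push_cast; omega))]
      ring
  · rw [FF_zero (fun hc => hpar (by have := cond_even hc; rw [Int.even_iff] at this ⊢; push_cast at this ⊢; omega)),
        FF_zero (fun hc => hpar (by have := cond_even hc; rw [Int.even_iff] at this ⊢; push_cast at this ⊢; omega)),
        FF_zero (fun hc => hpar (by have := cond_even hc; rw [Int.even_iff] at this ⊢; push_cast at this ⊢; omega))]
    ring

lemma FF0 (j m : ℕ) :
    FF 0 j m = if j = m then π*((j:ℝ)+1)*((j:ℝ)+3)/8 else 0 := by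
  by_cases h : j = m
  · obtain rfl := h
    rw [if_pos rfl, FF, if_pos ⟨by simp, by omega, by simp⟩]
    push_cast
    ring
  · rw [if_neg h, FF_zero (not_tri_of (by push_cast; omega))]

lemma FF1 (j m : ℕ) :
    FF 1 j m = if m = j+1 then π*((j:ℝ)+1)*((j:ℝ)+4)/4
      else if j = m+1 then π*((j:ℝ))*((j:ℝ)+3)/4 else 0 := by
  by_cases h1 : m = j+1
  · obtain rfl := h1
    rw [if_pos rfl, FF, if_pos ⟨by rw [abs_le]; omega, by omega, by
      rw [Int.even_iff]; omega⟩]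
    push_cast
    ring
  · rw [if_neg h1]
    by_cases h2 : j = m+1
    · obtain rfl := h2
      rw [if_pos rfl, FF, if_pos ⟨by rw [abs_le]; omega, by omega, by
        rw [Int.even_iff]; omega⟩]
      push_cast
      ring
    · rw [if_neg h2, FF_zero]
      rintro ⟨c1, c2, c3⟩
      obtain ⟨x1, x2⟩ := abs_le.mp c1
      rw [Int.even_iff] at c3
      omega

lemma even_tri {a b c : ℕ} (h : tri a b c) : Even ((a:ℤ)+b-c) := h.2.2

lemma FF_sym (i j m : ℕ) : FF i j m = FF j i m := by
  have hc : tri i j m ↔ tri j i m := by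
    unfold tri
    rw [abs_sub_comm]
    constructor <;> rintro ⟨h1, h2, h3⟩ <;>
      exact ⟨h1, by omega, by rw [Int.even_iff] at h3 ⊢; omega⟩
  rw [FF, FF]
  by_cases h : tri i j m
  · rw [if_pos h, if_pos (hc.mp h)]; ring
  · rw [if_neg h, if_neg (fun hh => h (hc.mpr hh))]

lemma FM0 (j : ℕ) : FF 1 j 0 = FF 0 j 1 := by
  by_cases h : j = 1
  · subst h
    rw [FF_rep (a := 1) (b := 1) (c := 0) (by decide) (by decide) (by decide) (by decide),
        FF_rep (a := 0) (b := 1) (c := 1) (by decide) (by decide) (by decide) (by decide)]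
    norm_num
  · rw [FF_zero (not_tri_of (by push_cast; omega)),
        FF_zero (not_tri_of (by push_cast; omega))]

lemma FM1 (j k : ℕ) :
    2*((k:ℝ)+3) * FF 1 j (k+1)
      = 4*(((k:ℝ)+2) * FF 0 j (k+2) + ((k:ℝ)+4) * FF 0 j k) := by
  by_cases hpar : Even ((j:ℤ)-k)
  · have hcase : j = k ∨ j = k+2 ∨ ((j:ℤ)+2 ≤ k ∨ (k:ℤ) ≤ (j:ℤ)-4) := by
      rw [Int.even_iff] at hpar; omega
    rcases hcase with rfl | rfl | hB
    · rw [FF_rep (a := 1) (b := j) (c := j+1) (by push_cast; rw [Int.even_iff]; omega)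
            (by push_cast; omega) (by push_cast; omega) (by push_cast; omega),
          FF_rep (a := 0) (b := j) (c := j+2) (by push_cast; rw [Int.even_iff]; omega)
            (by push_cast; omega) (by push_cast; omega) (by push_cast; omega),
          FF_rep (a := 0) (b := j) (c := j) (by push_cast; rw [Int.even_iff]; omega)
            (by push_cast; omega) (by push_cast; omega) (by push_cast; omega)]
      push_cast; ring
    · rw [FF_rep (a := 1) (b := k+2) (c := k+1) (by push_cast; rw [Int.even_iff]; omega)
            (by push_cast; omega) (by push_cast; omega) (by push_cast; omega),
          FF_rep (a := 0) (b := k+2) (c := k+2) (by push_cast; rw [Int.even_iff]; omega)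
            (by push_cast; omega) (by push_cast; omega) (by push_cast; omega),
          FF_rep (a := 0) (b := k+2) (c := k) (by push_cast; rw [Int.even_iff]; omega)
            (by push_cast; omega) (by push_cast; omega) (by push_cast; omega)]
      push_cast; ring
    · rw [FF_zero (not_tri_of (by push_cast; omega)),
          FF_zero (not_tri_of (by push_cast; omega)),
          FF_zero (not_tri_of (by push_cast; omega))]
      ring
  · rw [FF_zero (fun hc => hpar (by have := even_tri hc; rw [Int.even_iff] at this ⊢; push_cast at this ⊢; omega)),
        FF_zero (fun hc => hpar (by have := even_tri hc; rw [Int.even_iff] at this ⊢; push_cast at this ⊢; omega)),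
        FF_zero (fun hc => hpar (by have := even_tri hc; rw [Int.even_iff] at this ⊢; push_cast at this ⊢; omega))]
    ring

lemma main_aux (j : ℕ) (hbase : ∀ c, TT 0 j c = FF 0 j c) :
    ∀ i m, TT i j m = FF i j m := by
  intro i
  induction i using Nat.strong_induction_on with
  | _ i ih =>
    match i with
    | 0 => exact hbase
    | 1 =>
      intro m
      rcases m with _ | k
      · rw [T_one j 0, show (4:ℝ) * YY 0 j 0 = TT 0 j 1 from Y_shift0 0 j, hbase 1, FM0 j]
      · have hs := Y_shift 0 j k
        rw [hbase (k+2), hbase k] at hs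
        have hM := FM1 j k
        have hne : (2:ℝ)*((k:ℝ)+3) ≠ 0 := by positivity
        apply mul_left_cancel₀ hne
        rw [T_one j (k+1)]
        linear_combination 4*hs - hM
    | (ii+2) =>
      intro m
      have hrec := T_rec1 ii j m
      rw [ih ii (by omega) m] at hrec
      rcases m with _ | k
      · have hs := Y_shift0 (ii+1) j
        rw [ih (ii+1) (by omega) 1] at hs
        have hF := FR0 ii j
        have hne : ((ii:ℝ)+2) ≠ 0 := by positivity
        apply mul_left_cancel₀ hne
        linear_combination hrec + (((ii:ℝ)+3)/2) * hs - (1/4) * hF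
      · have hs := Y_shift (ii+1) j k
        rw [ih (ii+1) (by omega) (k+2), ih (ii+1) (by omega) k] at hs
        have hF := FR1 ii j k
        have hne : (2*((k:ℝ)+3))*((ii:ℝ)+2) ≠ 0 := by positivity
        apply mul_left_cancel₀ hne
        linear_combination (2*((k:ℝ)+3)) * hrec + (2*((ii:ℝ)+3)) * hs - hF

lemma base00 : ∀ c, TT 0 0 c = FF 0 0 c := by
  intro c
  rw [T00 c]
  by_cases h : c = 0
  · subst h
    rw [FF_rep (a := 0) (b := 0) (c := 0) (by decide) (by decide) (by decide) (by decide)]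
    norm_num
    ring
  · rw [if_neg h, FF_zero (not_tri_of (by push_cast; omega))]

lemma main_thm (i j m : ℕ) : TT i j m = FF i j m := by
  apply main_aux j (fun c => ?_) i m
  rw [T0_comm j c, main_aux 0 base00 j c, FF_sym]

lemma wsq (n : ℕ) : (wYM n)^2 = (8/π)/(((n:ℝ)+1)*((n:ℝ)+3)) := by
  rw [wYM, div_pow, Real.sq_sqrt (by positivity), Real.sq_sqrt (by positivity)]

lemma wnonneg (n : ℕ) : 0 ≤ wYM n := by
  rw [wYM]; positivity

lemma key (i j m : ℕ) :
    wYM i * wYM j * wYM m * (π/128)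
      = 1 / (4 * Real.sqrt (2 * π * ((i:ℝ) + 1) * ((i:ℝ) + 3) * ((j:ℝ) + 1) *
          ((j:ℝ) + 3) * ((m:ℝ) + 1) * ((m:ℝ) + 3))) := by
  have hX : (0:ℝ) < 2 * π * ((i:ℝ) + 1) * ((i:ℝ) + 3) * ((j:ℝ) + 1) *
      ((j:ℝ) + 3) * ((m:ℝ) + 1) * ((m:ℝ) + 3) := by positivity
  have hL : 0 ≤ wYM i * wYM j * wYM m * (π/128) := by
    have := wnonneg i; have := wnonneg j; have := wnonneg m
    have := Real.pi_pos
    positivity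
  have hR : (0:ℝ) < 1 / (4 * Real.sqrt (2 * π * ((i:ℝ) + 1) * ((i:ℝ) + 3) * ((j:ℝ) + 1) *
      ((j:ℝ) + 3) * ((m:ℝ) + 1) * ((m:ℝ) + 3))) := by
    have := Real.sqrt_pos.mpr hX
    positivity
  have hsq : (wYM i * wYM j * wYM m * (π/128))^2
      = (1 / (4 * Real.sqrt (2 * π * ((i:ℝ) + 1) * ((i:ℝ) + 3) * ((j:ℝ) + 1) *
          ((j:ℝ) + 3) * ((m:ℝ) + 1) * ((m:ℝ) + 3))))^2 := by
    have hs : (Real.sqrt (2 * π * ((i:ℝ) + 1) * ((i:ℝ) + 3) * ((j:ℝ) + 1) *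
        ((j:ℝ) + 3) * ((m:ℝ) + 1) * ((m:ℝ) + 3)))^2
        = 2 * π * ((i:ℝ) + 1) * ((i:ℝ) + 3) * ((j:ℝ) + 1) *
          ((j:ℝ) + 3) * ((m:ℝ) + 1) * ((m:ℝ) + 3) := Real.sq_sqrt hX.le
    rw [mul_pow, mul_pow, mul_pow, div_pow, div_pow, one_pow, mul_pow, hs,
        wsq, wsq, wsq]
    have hpi := Real.pi_pos
    have h1 : ((i:ℝ)+1) ≠ 0 := by positivity
    have h2 : ((i:ℝ)+3) ≠ 0 := by positivity
    have h3 : ((j:ℝ)+1) ≠ 0 := by positivity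
    have h4 : ((j:ℝ)+3) ≠ 0 := by positivity
    have h5 : ((m:ℝ)+1) ≠ 0 := by positivity
    have h6 : ((m:ℝ)+3) ≠ 0 := by positivity
    have h7 : π ≠ 0 := ne_of_gt hpi
    field_simp
    ring
  have habs := (sq_eq_sq_iff_abs_eq_abs _ _).mp hsq
  rwa [abs_of_nonneg hL, abs_of_nonneg hR.le] at habs

/-- Closed formula for the quadratic Yang–Mills Fourier coefficients. -/
theorem cbar_closed_formula (i j m : ℕ) :
    ((|(i:ℤ) - (j:ℤ)| ≤ (m:ℤ) ∧ (m:ℤ) ≤ (i:ℤ) + (j:ℤ) ∧ Even ((i:ℤ) + (j:ℤ) - (m:ℤ))) →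
      cbar i j m =
        ((i:ℝ) + j - m + 2) * ((i:ℝ) - j + m + 2) * (-(i:ℝ) + j + m + 2) *
            ((i:ℝ) + j + m + 6) /
          (4 * Real.sqrt (2 * Real.pi * ((i:ℝ) + 1) * ((i:ℝ) + 3) * ((j:ℝ) + 1) *
            ((j:ℝ) + 3) * ((m:ℝ) + 1) * ((m:ℝ) + 3)))) ∧
    (¬(|(i:ℤ) - (j:ℤ)| ≤ (m:ℤ) ∧ (m:ℤ) ≤ (i:ℤ) + (j:ℤ) ∧ Even ((i:ℤ) + (j:ℤ) - (m:ℤ))) →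
      cbar i j m = 0) := by
  have hc : cbar i j m = wYM i * wYM j * wYM m * TT i j m := rfl
  constructor
  · intro hcond
    rw [hc, main_thm, FF, if_pos (show tri i j m from hcond)]
    linear_combination (((i:ℝ)+j-m+2) * ((i:ℝ)-j+m+2) * (-(i:ℝ)+j+m+2) * ((i:ℝ)+j+m+6)) * key i j m
  · intro hncond
    rw [hc, main_thm, FF_zero (fun h => hncond h), mul_zero]
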